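/- The normalization constant of the Jacobi Muttalib–Borodin ensemble: ∫_{(0,1)^N} ∏_{1≤i<j≤N}(x_j-x_i)(x_j^θ - x_i^θ) ∏_{k=1}^N x_k^a (1-x_k)^b dx = θ^{N(N-1)/2} ∏_{l=1}^N Γ(θ(l-1)+a+1)Γ(l+b)Γ(l+1) / Γ(θ(l-1)+N+a+b+1), for θ > 0, a > -1, b > -1. -/

import Mathlib

open MeasureTheory Finset Polynomial Matrix intervalIntegral

section AuxMB

lemma prod_prod_const_mul {n : ℕ} (c : ℝ) (g : Fin n → Fin n → ℝ) :
    (∏ i : Fin n, ∏ j ∈ Ioi i, (c * g i j))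
      = c ^ (∑ i : Fin n, (Ioi i).card) * ∏ i : Fin n, ∏ j ∈ Ioi i, g i j := by
  simp_rw [Finset.prod_mul_distrib, Finset.prod_const]
  rw [Finset.prod_pow_eq_pow_sum]

lemma sum_card_Ioi (n : ℕ) : (∑ i : Fin n, (Ioi i).card) = n * (n-1) / 2 := by
  simp only [Fin.card_Ioi]
  rw [Fin.sum_univ_eq_sum_range (fun l => n - 1 - l) n, Finset.sum_range_reflect (fun l => l) n,
    Finset.sum_range_id]

lemma prod_fact (n : ℕ) :
    (∏ i : Fin (n+1), ∏ j ∈ Ioi i, ((j:ℝ) - (i:ℝ))) = (Nat.superFactorial n : ℝ) := by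
  have h := Matrix.det_vandermonde_id_eq_superFactorial (R := ℝ) n
  rw [Matrix.det_vandermonde] at h
  exact h

lemma beta_complex_eq (p q : ℝ) (hp : -1 < p) (hq : -1 < q) :
    ((∫ x in Set.Ioo (0:ℝ) 1, x ^ p * (1-x) ^ q : ℝ) : ℂ)
      = Complex.betaIntegral (p+1) (q+1) := by
  rw [← integral_Ioc_eq_integral_Ioo, ← intervalIntegral.integral_of_le zero_le_one]
  rw [Complex.betaIntegral, ← intervalIntegral.integral_ofReal]
  refine intervalIntegral.integral_congr fun x hx => ?_
  rw [Set.uIcc_of_le zero_le_one] at hx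
  obtain ⟨h0, h1⟩ := hx
  push_cast
  rw [Complex.ofReal_cpow h0, Complex.ofReal_cpow (by linarith)]
  push_cast
  ring_nf

lemma beta_value (p q : ℝ) (hp : -1 < p) (hq : -1 < q) :
    ∫ x in Set.Ioo (0:ℝ) 1, x ^ p * (1-x) ^ q
      = Real.Gamma (p+1) * Real.Gamma (q+1) / Real.Gamma (p+q+2) := by
  have h := Complex.Gamma_mul_Gamma_eq_betaIntegral
    (s := (p:ℂ)+1) (t := (q:ℂ)+1) (by simpa using by linarith) (by simpa using by linarith)
  rw [← beta_complex_eq p q hp hq] at h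
  have hg : ((p:ℂ)+1) + ((q:ℂ)+1) = ((p+q+2 : ℝ) : ℂ) := by push_cast; ring
  rw [hg] at h
  have h1 : ((p:ℂ)+1) = ((p+1:ℝ):ℂ) := by push_cast; ring
  have h2 : ((q:ℂ)+1) = ((q+1:ℝ):ℂ) := by push_cast; ring
  rw [h1, h2, Complex.Gamma_ofReal, Complex.Gamma_ofReal, Complex.Gamma_ofReal] at h
  have hne : Real.Gamma (p+q+2) ≠ 0 :=
    (Real.Gamma_pos_of_pos (by linarith)).ne'
  field_simp
  norm_cast at h
  linarith [h]

lemma beta_integrable (p q : ℝ) (hp : -1 < p) (hq : -1 < q) :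
    IntegrableOn (fun x : ℝ => x ^ p * (1-x) ^ q) (Set.Ioo (0:ℝ) 1) := by
  have h := Complex.betaIntegral_convergent (u := (p:ℂ)+1) (v := (q:ℂ)+1)
    (by simpa using by linarith) (by simpa using by linarith)
  rw [intervalIntegrable_iff_integrableOn_Ioo_of_le zero_le_one] at h
  have := h.re
  refine MeasureTheory.IntegrableOn.congr_fun this ?_ measurableSet_Ioo
  intro x hx
  obtain ⟨h0, h1⟩ := hx
  simp only [Function.comp]
  rw [show ((p:ℂ)+1-1) = ((p:ℝ):ℂ) by push_cast; ring,
      show ((q:ℂ)+1-1) = ((q:ℝ):ℂ) by push_cast; ring,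
      ← Complex.ofReal_cpow h0.le, ← Complex.ofReal_one, ← Complex.ofReal_sub,
      ← Complex.ofReal_cpow (by linarith), ← Complex.ofReal_mul]
  simp

lemma andreief (N : ℕ) (F G : Fin N → ℝ → ℝ)
    (hFG : ∀ i j, Integrable (fun x => F i x * G j x)) :
    (∫ x : Fin N → ℝ,
        Matrix.det (Matrix.of fun i j => F i (x j)) *
        Matrix.det (Matrix.of fun i j => G i (x j)))
      = (N.factorial : ℝ) * Matrix.det (Matrix.of fun i j => ∫ y : ℝ, F i y * G j y) := by
  have key : ∀ x : Fin N → ℝ,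
      Matrix.det (Matrix.of fun i j => F i (x j)) *
        Matrix.det (Matrix.of fun i j => G i (x j))
      = ∑ σ : Equiv.Perm (Fin N), ∑ τ : Equiv.Perm (Fin N),
          ((Equiv.Perm.sign σ : ℤ) * (Equiv.Perm.sign τ : ℤ) : ℝ) *
            ∏ j, (F (σ j) (x j) * G (τ j) (x j)) := by
    intro x
    rw [Matrix.det_apply', Matrix.det_apply', Finset.sum_mul_sum]
    refine Finset.sum_congr rfl fun σ _ => Finset.sum_congr rfl fun τ _ => ?_
    simp only [Matrix.of_apply]
    rw [Finset.prod_mul_distrib]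
    push_cast
    ring
  simp_rw [key]
  have hint : ∀ σ τ : Equiv.Perm (Fin N),
      Integrable (fun x : Fin N → ℝ => ∏ j, (F (σ j) (x j) * G (τ j) (x j))) := by
    intro σ τ
    exact Integrable.fintype_prod (f := fun j x => F (σ j) x * G (τ j) x)
      (fun j => hFG (σ j) (τ j))
  rw [integral_finset_sum _ (fun σ _ => integrable_finset_sum _
    (fun τ _ => ((hint σ τ).const_mul _)))]
  have : ∀ σ : Equiv.Perm (Fin N),
      (∫ x : Fin N → ℝ, ∑ τ : Equiv.Perm (Fin N),
        ((Equiv.Perm.sign σ : ℤ) * (Equiv.Perm.sign τ : ℤ) : ℝ) *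
          ∏ j, (F (σ j) (x j) * G (τ j) (x j)))
      = Matrix.det (Matrix.of fun i j => ∫ y : ℝ, F i y * G j y) := by
    intro σ
    rw [integral_finset_sum _ (fun τ _ => ((hint σ τ).const_mul _))]
    have hterm : ∀ τ : Equiv.Perm (Fin N),
        (∫ x : Fin N → ℝ, ((Equiv.Perm.sign σ : ℤ) * (Equiv.Perm.sign τ : ℤ) : ℝ) *
            ∏ j, (F (σ j) (x j) * G (τ j) (x j)))
        = ((Equiv.Perm.sign σ : ℤ) * (Equiv.Perm.sign τ : ℤ) : ℝ) *
            ∏ j, ∫ y : ℝ, F (σ j) y * G (τ j) y := by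
      intro τ
      rw [MeasureTheory.integral_const_mul]
      congr 1
      exact MeasureTheory.integral_fintype_prod_eq_prod (ι := Fin N)
        (f := fun j x => F (σ j) x * G (τ j) x)
    simp_rw [hterm]
    rw [← Matrix.det_transpose, Matrix.det_apply']
    refine Fintype.sum_equiv (Equiv.mulRight σ⁻¹) _ _ fun ρ => ?_
    simp only [Equiv.coe_mulRight, Matrix.transpose_apply, Matrix.of_apply]
    have hs : ((Equiv.Perm.sign σ : ℤ) * (Equiv.Perm.sign ρ : ℤ) : ℝ)
        = ((Equiv.Perm.sign (ρ * σ⁻¹) : ℤ) : ℝ) := by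
      rw [Equiv.Perm.sign_mul, Equiv.Perm.sign_inv]
      push_cast
      rcases Int.units_eq_one_or (Equiv.Perm.sign σ) with h | h <;>
        rcases Int.units_eq_one_or (Equiv.Perm.sign ρ) with h' | h' <;>
        simp [h, h']
    rw [hs]
    congr 1
    calc ∏ j, ∫ y : ℝ, F (σ j) y * G (ρ j) y
        = ∏ j, (fun i => ∫ y : ℝ, F i y * G ((ρ * σ⁻¹) i) y) (σ j) := by
          refine Finset.prod_congr rfl fun j _ => ?_
          simp [Equiv.Perm.mul_apply]
      _ = ∏ i, ∫ y : ℝ, F i y * G ((ρ * σ⁻¹) i) y :=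
          Equiv.prod_comp σ (fun i => ∫ y : ℝ, F i y * G ((ρ * σ⁻¹) i) y)
  rw [Finset.sum_congr rfl (fun σ _ => this σ)]
  rw [Finset.sum_const, Finset.card_univ, Fintype.card_perm, Fintype.card_fin, nsmul_eq_mul]

lemma gamma_prod {y : ℝ} (hy : 0 < y) {i : ℕ} : ∀ {d : ℕ}, i ≤ d →
    Real.Gamma (y + d) = (∏ m ∈ Finset.Ico i d, (y + m)) * Real.Gamma (y + i) := by
  intro d
  induction d with
  | zero => intro h; interval_cases i; simp
  | succ d ih =>
    intro h
    rcases Nat.lt_or_ge i (d+1) with h' | h'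
    · have hid : i ≤ d := Nat.lt_succ_iff.mp h'
      have h0 : (y + d) ≠ 0 := by positivity
      have : Real.Gamma (y + (d+1)) = (y + d) * Real.Gamma (y + d) := by
        rw [show y + ((d:ℝ)+1) = (y + d) + 1 by ring, Real.Gamma_add_one h0]
      push_cast
      rw [this, ih hid, Finset.prod_Ico_succ_top hid]
      ring
    · have : i = d + 1 := le_antisymm h h'
      subst this
      simp

lemma prod_Ioi_rev {M : Type*} [CommMonoid M] {n : ℕ} (f : Fin n → Fin n → M) :
    (∏ i : Fin n, ∏ j ∈ Ioi i, f (Fin.rev j) (Fin.rev i)) = ∏ i : Fin n, ∏ j ∈ Ioi i, f i j := by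
  rw [Finset.prod_sigma', Finset.prod_sigma']
  refine Finset.prod_nbij' (fun p => ⟨p.2.rev, p.1.rev⟩) (fun p => ⟨p.2.rev, p.1.rev⟩)
    ?_ ?_ ?_ ?_ ?_
  · rintro ⟨i, j⟩ hm
    simp only [Finset.mem_sigma, Finset.mem_univ, Finset.mem_Ioi, true_and] at hm ⊢
    exact Fin.rev_lt_rev.mpr hm
  · rintro ⟨i, j⟩ hm
    simp only [Finset.mem_sigma, Finset.mem_univ, Finset.mem_Ioi, true_and] at hm ⊢
    exact Fin.rev_lt_rev.mpr hm
  · rintro ⟨i, j⟩ _; simp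
  · rintro ⟨i, j⟩ _; simp
  · rintro ⟨i, j⟩ _; rfl

lemma detD (N : ℕ) (w : Fin N → ℝ) (hw : ∀ j, 0 < w j) :
    Matrix.det (Matrix.of fun i j : Fin N => 1 / Real.Gamma (w j + i)) =
      (∏ i : Fin N, ∏ j ∈ Ioi i, (w i - w j)) /
        ∏ j : Fin N, Real.Gamma (w j + ((N-1 : ℕ) : ℝ)) := by
  have hGpos : ∀ (j : Fin N) (m : ℕ), 0 < Real.Gamma (w j + m) := fun j m =>
    Real.Gamma_pos_of_pos (by have := hw j; positivity)
  -- entry rewrite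
  have entry : ∀ i j : Fin N, (1 : ℝ) / Real.Gamma (w j + i)
      = (1 / Real.Gamma (w j + ((N-1:ℕ):ℝ))) * ∏ m ∈ Finset.Ico (i:ℕ) (N-1), (w j + m) := by
    intro i j
    have hi : (i : ℕ) ≤ N - 1 := by omega
    have := gamma_prod (hw j) hi
    rw [this]
    have h1 := (hGpos j i).ne'
    have h2 : (∏ m ∈ Finset.Ico (i:ℕ) (N-1), (w j + m)) ≠ 0 := by
      refine Finset.prod_ne_zero_iff.mpr fun m _ => ?_
      have := hw j; positivity
    field_simp
  have step1 : Matrix.det (Matrix.of fun i j : Fin N => 1 / Real.Gamma (w j + i))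
      = (∏ j : Fin N, 1 / Real.Gamma (w j + ((N-1:ℕ):ℝ))) *
        Matrix.det (Matrix.of fun i j : Fin N => ∏ m ∈ Finset.Ico (i:ℕ) (N-1), (w j + m)) := by
    rw [← Matrix.det_mul_row]
    congr 1
    ext i j
    simp only [Matrix.of_apply]
    exact entry i j
  -- polynomial matrix
  set q : Fin N → ℝ[X] := fun k => ∏ m ∈ Finset.Ico (N-1-(k:ℕ)) (N-1), (X + C (m:ℝ)) with hq
  have hmonic : ∀ k, (q k).Monic := fun k =>
    monic_prod_of_monic _ _ fun m _ => monic_X_add_C _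
  have hdeg : ∀ k : Fin N, (q k).natDegree = k := by
    intro k
    rw [hq]
    rw [natDegree_prod_of_monic _ _ fun m _ => monic_X_add_C _]
    simp only [natDegree_X_add_C]
    rw [Finset.sum_const, Nat.card_Ico, smul_eq_mul, mul_one]
    omega
  have heval : ∀ (k : Fin N) (y : ℝ), (q k).eval y = ∏ m ∈ Finset.Ico (N-1-(k:ℕ)) (N-1), (y + m) := by
    intro k y
    rw [hq, eval_prod]
    refine Finset.prod_congr rfl fun m _ => by simp
  have step2 : Matrix.det (Matrix.of fun i j : Fin N => ∏ m ∈ Finset.Ico (i:ℕ) (N-1), (w j + m))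
      = Matrix.det (Matrix.of fun i j : Fin N => (q j).eval (w (Fin.rev i))) := by
    rw [← Matrix.det_transpose (Matrix.of fun i j : Fin N => ∏ m ∈ Finset.Ico (i:ℕ) (N-1), (w j + m))]
    have : (Matrix.of fun i j : Fin N => ∏ m ∈ Finset.Ico (i:ℕ) (N-1), (w j + m))ᵀ
        = (Matrix.of fun i j : Fin N => (q j).eval (w (Fin.rev i))).submatrix Fin.rev Fin.rev := by
      ext i j
      simp only [Matrix.transpose_apply, Matrix.of_apply, Matrix.submatrix_apply]
      rw [heval, Fin.rev_rev]
      congr 2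
      rw [Fin.val_rev]
      omega
    rw [this]
    exact Matrix.det_submatrix_equiv_self Fin.revPerm _
  have step3 : Matrix.det (Matrix.of fun i j : Fin N => (q j).eval (w (Fin.rev i)))
      = ∏ i : Fin N, ∏ j ∈ Ioi i, (w i - w j) := by
    rw [← Matrix.det_eval_matrixOfPolynomials_eq_det_vandermonde (fun i => w (Fin.rev i)) q hdeg hmonic]
    rw [Matrix.det_vandermonde]
    exact prod_Ioi_rev (fun i j => w i - w j)
  rw [step1, step2, step3, Finset.prod_div_distrib, Finset.prod_const_one,
    one_div_mul_eq_div]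
end AuxMB

/-- Normalisation of the Jacobi Muttalib–Borodin ensemble. -/
theorem jacobi_MB_normalisation (N : ℕ) (hN : 1 ≤ N) (θ a b : ℝ)
    (hθ : 0 < θ) (ha : -1 < a) (hb : -1 < b) :
    (∫ x in Set.univ.pi fun _ : Fin N => Set.Ioo (0:ℝ) 1,
        (∏ i : Fin N, ∏ j ∈ Finset.Ioi i, (x j - x i) * (x j ^ θ - x i ^ θ)) *
          ∏ k : Fin N, x k ^ a * (1 - x k) ^ b) =
      θ ^ (N * (N - 1) / 2) *
        ∏ l ∈ Finset.range N,
          Real.Gamma (θ * l + a + 1) * Real.Gamma (l + 1 + b) * Real.Gamma (l + 2) /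
            Real.Gamma (θ * l + N + a + b + 1) := by
  have hK := sum_card_Ioi N
  set K : ℕ := N * (N - 1) / 2 with hKdef
  set w : ℝ → ℝ := Set.indicator (Set.Ioo (0:ℝ) 1) (fun x => x ^ a * (1-x) ^ b) with hw
  set F : Fin N → ℝ → ℝ := fun i x => w x * (1 - x) ^ (i : ℕ) with hF
  set G : Fin N → ℝ → ℝ := fun i x => x ^ (θ * (i : ℕ)) with hG
  -- pointwise identity
  have hpoint : ∀ x : Fin N → ℝ,
      Set.indicator (Set.univ.pi fun _ : Fin N => Set.Ioo (0:ℝ) 1)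
        (fun x => (∏ i : Fin N, ∏ j ∈ Finset.Ioi i, (x j - x i) * (x j ^ θ - x i ^ θ)) *
          ∏ k : Fin N, x k ^ a * (1 - x k) ^ b) x
      = (-1:ℝ)^K * (Matrix.det (Matrix.of fun i j => F i (x j)) *
          Matrix.det (Matrix.of fun i j => G i (x j))) := by
    intro x
    by_cases hx : x ∈ Set.univ.pi fun _ : Fin N => Set.Ioo (0:ℝ) 1
    · rw [Set.indicator_of_mem hx]
      have hmem : ∀ j, x j ∈ Set.Ioo (0:ℝ) 1 := fun j => hx j (Set.mem_univ j)
      have hVdm : Matrix.det (Matrix.of fun i j : Fin N => (1 - x j) ^ (i:ℕ))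
          = (-1:ℝ)^K * ∏ i, ∏ j ∈ Finset.Ioi i, (x j - x i) := by
        have e2 : (Matrix.of fun i j : Fin N => (1 - x j) ^ (i:ℕ))
            = (Matrix.vandermonde fun j => 1 - x j)ᵀ := by
          ext i j; simp [Matrix.vandermonde]
        rw [e2, Matrix.det_transpose, Matrix.det_vandermonde]
        calc ∏ i : Fin N, ∏ j ∈ Finset.Ioi i, ((1 - x j) - (1 - x i))
            = ∏ i : Fin N, ∏ j ∈ Finset.Ioi i, ((-1) * (x j - x i)) := by
              refine Finset.prod_congr rfl fun i _ => Finset.prod_congr rfl fun j _ => by ring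
          _ = (-1:ℝ)^K * ∏ i, ∏ j ∈ Finset.Ioi i, (x j - x i) := by
              rw [prod_prod_const_mul, hK]
      have h1 : Matrix.det (Matrix.of fun i j => F i (x j))
          = (∏ k, x k ^ a * (1 - x k) ^ b) *
            ((-1:ℝ)^K * ∏ i, ∏ j ∈ Finset.Ioi i, (x j - x i)) := by
        have e1 : (Matrix.of fun i j : Fin N => F i (x j))
            = Matrix.of fun i j : Fin N => (w (x j)) * ((1 - x j) ^ (i:ℕ)) := rfl
        rw [e1]; refine (Matrix.det_mul_row (fun j => w (x j)) (Matrix.of fun i j : Fin N => (1 - x j) ^ (i:ℕ))).trans ?_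
        have hwprod : (∏ j : Fin N, w (x j)) = ∏ k, x k ^ a * (1 - x k) ^ b :=
          Finset.prod_congr rfl fun k _ => Set.indicator_of_mem (hmem k) _
        exact congrArg₂ (· * ·) hwprod hVdm
      have h2 : Matrix.det (Matrix.of fun i j => G i (x j))
          = ∏ i, ∏ j ∈ Finset.Ioi i, (x j ^ θ - x i ^ θ) := by
        have e3 : (Matrix.of fun i j : Fin N => G i (x j))
            = (Matrix.vandermonde fun j => x j ^ θ)ᵀ := by
          ext i j
          simp only [Matrix.transpose_apply, Matrix.of_apply, Matrix.vandermonde, hG]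
          rw [Real.rpow_mul (hmem j).1.le, Real.rpow_natCast]
        rw [e3, Matrix.det_transpose, Matrix.det_vandermonde]
      rw [h1, h2]
      have hEK : (-1:ℝ)^K * (-1:ℝ)^K = 1 := by
        rw [← pow_add]; exact Even.neg_one_pow ⟨K, rfl⟩
      calc (∏ i : Fin N, ∏ j ∈ Finset.Ioi i, (x j - x i) * (x j ^ θ - x i ^ θ)) *
            ∏ k : Fin N, x k ^ a * (1 - x k) ^ b
          = ((∏ i : Fin N, ∏ j ∈ Finset.Ioi i, (x j - x i)) *
              (∏ i : Fin N, ∏ j ∈ Finset.Ioi i, (x j ^ θ - x i ^ θ))) *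
            ∏ k : Fin N, x k ^ a * (1 - x k) ^ b := by
            simp_rw [Finset.prod_mul_distrib]
        _ = ((-1:ℝ)^K * (-1:ℝ)^K) * (((∏ k, x k ^ a * (1 - x k) ^ b) *
              (∏ i, ∏ j ∈ Finset.Ioi i, (x j - x i))) *
              ∏ i, ∏ j ∈ Finset.Ioi i, (x j ^ θ - x i ^ θ)) := by rw [hEK]; ring
        _ = (-1:ℝ)^K * ((∏ k, x k ^ a * (1 - x k) ^ b) *
              ((-1:ℝ)^K * ∏ i, ∏ j ∈ Finset.Ioi i, (x j - x i)) *
              ∏ i, ∏ j ∈ Finset.Ioi i, (x j ^ θ - x i ^ θ)) := by ring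
    · rw [Set.indicator_of_notMem hx]
      have : ∃ m : Fin N, x m ∉ Set.Ioo (0:ℝ) 1 := by
        by_contra h
        push_neg at h
        exact hx fun i _ => h i
      obtain ⟨m, hm⟩ := this
      have hdet0 : Matrix.det (Matrix.of fun i j => F i (x j)) = 0 := by
        refine Matrix.det_eq_zero_of_column_eq_zero m fun i => ?_
        simp only [Matrix.of_apply, hF, hw, Set.indicator_of_notMem hm, zero_mul]
      rw [hdet0]
      ring
  -- integrand of the matrix of moments
  have hprodFG : ∀ (i j : Fin N), (fun x => F i x * G j x)
      = Set.indicator (Set.Ioo (0:ℝ) 1)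
          (fun x => x ^ (θ * (j:ℕ) + a) * (1-x) ^ (b + (i:ℕ))) := by
    intro i j
    funext x
    by_cases hx : x ∈ Set.Ioo (0:ℝ) 1
    · rw [Set.indicator_of_mem hx]
      obtain ⟨h0, h1⟩ := hx
      simp only [hF, hG, hw, Set.indicator_of_mem (Set.mem_Ioo.mpr ⟨h0, h1⟩)]
      rw [Real.rpow_add h0, Real.rpow_add (by linarith : (0:ℝ) < 1 - x), Real.rpow_natCast]
      ring
    · rw [Set.indicator_of_notMem hx]
      simp only [hF, hw, Set.indicator_of_notMem hx, zero_mul]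
  have hq : ∀ i : Fin N, (-1:ℝ) < b + (i:ℕ) := fun i => by
    have : (0:ℝ) ≤ (i:ℕ) := Nat.cast_nonneg _
    linarith
  have hp : ∀ j : Fin N, (-1:ℝ) < θ * (j:ℕ) + a := fun j => by
    have : (0:ℝ) ≤ θ * (j:ℕ) := mul_nonneg hθ.le (Nat.cast_nonneg _)
    linarith
  have hFG : ∀ i j : Fin N, Integrable (fun x => F i x * G j x) := by
    intro i j
    rw [hprodFG i j, integrable_indicator_iff measurableSet_Ioo]
    exact beta_integrable _ _ (hp j) (hq i)
  have hM : ∀ i j : Fin N, (∫ y : ℝ, F i y * G j y)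
      = Real.Gamma (θ * (j:ℕ) + a + 1) * (Real.Gamma (b + (i:ℕ) + 1) *
          (1 / Real.Gamma ((θ * (j:ℕ) + a + b + 2) + (i:ℕ)))) := by
    intro i j
    rw [hprodFG i j, MeasureTheory.integral_indicator measurableSet_Ioo, beta_value _ _ (hp j) (hq i)]
    rw [show (θ * (j:ℕ) + a) + (b + (i:ℕ)) + 2 = (θ * (j:ℕ) + a + b + 2) + (i:ℕ) by ring]
    have := (Real.Gamma_pos_of_pos (show (0:ℝ) < (θ * (j:ℕ) + a + b + 2) + (i:ℕ) by
      have h1 : (0:ℝ) ≤ θ * (j:ℕ) := mul_nonneg hθ.le (Nat.cast_nonneg _)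
      have h2 : (0:ℝ) ≤ (i:ℕ) := Nat.cast_nonneg _
      linarith)).ne'
    field_simp
  -- compute the determinant of moments
  have hwpos : ∀ j : Fin N, (0:ℝ) < θ * (j:ℕ) + a + b + 2 := fun j => by
    have : (0:ℝ) ≤ θ * (j:ℕ) := mul_nonneg hθ.le (Nat.cast_nonneg _)
    linarith
  have hdetM : Matrix.det (Matrix.of fun i j => ∫ y : ℝ, F i y * G j y)
      = (∏ j : Fin N, Real.Gamma (θ * (j:ℕ) + a + 1)) *
        ((∏ i : Fin N, Real.Gamma (b + (i:ℕ) + 1)) *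
          (((-θ) ^ K * ∏ i : Fin N, ∏ j ∈ Finset.Ioi i, ((j:ℝ) - (i:ℝ))) /
            ∏ j : Fin N, Real.Gamma ((θ * (j:ℕ) + a + b + 2) + ((N-1:ℕ):ℝ)))) := by
    have e : (Matrix.of fun i j => ∫ y : ℝ, F i y * G j y)
        = Matrix.of fun i j : Fin N => Real.Gamma (θ * (j:ℕ) + a + 1) *
            ((Matrix.of fun i j : Fin N => Real.Gamma (b + (i:ℕ) + 1) *
              ((Matrix.of fun i j : Fin N =>
                1 / Real.Gamma ((θ * (j:ℕ) + a + b + 2) + (i:ℕ))) i j)) i j) := by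
      ext i j; simp only [Matrix.of_apply]; exact hM i j
    rw [e, Matrix.det_mul_row, Matrix.det_mul_column,
      detD N (fun j : Fin N => θ * (j:ℕ) + a + b + 2) hwpos]
    congr 1
    congr 1
    congr 1
    calc ∏ i : Fin N, ∏ j ∈ Finset.Ioi i,
          ((θ * (i:ℕ) + a + b + 2) - (θ * (j:ℕ) + a + b + 2))
        = ∏ i : Fin N, ∏ j ∈ Finset.Ioi i, ((-θ) * ((j:ℝ) - (i:ℝ))) := by
          refine Finset.prod_congr rfl fun i _ => Finset.prod_congr rfl fun j _ => by ring
      _ = (-θ) ^ K * ∏ i : Fin N, ∏ j ∈ Finset.Ioi i, ((j:ℝ) - (i:ℝ)) := by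
          rw [prod_prod_const_mul, hK]
  -- main computation
  rw [← MeasureTheory.integral_indicator (MeasurableSet.univ_pi fun _ => measurableSet_Ioo)]
  simp only [hpoint]
  rw [MeasureTheory.integral_const_mul, andreief N F G hFG, hdetM]
  -- now pure algebra
  obtain ⟨n, rfl⟩ : ∃ n, N = n + 1 := ⟨N - 1, by omega⟩
  rw [prod_fact n]
  rw [Fin.prod_univ_eq_prod_range (fun l => Real.Gamma (θ * l + a + 1)) (n+1),
    Fin.prod_univ_eq_prod_range (fun l => Real.Gamma (b + l + 1)) (n+1),
    Fin.prod_univ_eq_prod_range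
      (fun l => Real.Gamma ((θ * l + a + b + 2) + (((n+1-1:ℕ)):ℝ))) (n+1)]
  have hB : ∏ l ∈ Finset.range (n+1), Real.Gamma (b + l + 1)
      = ∏ l ∈ Finset.range (n+1), Real.Gamma (l + 1 + b) := by
    refine Finset.prod_congr rfl fun l _ => by rw [show b + (l:ℝ) + 1 = (l:ℝ) + 1 + b by ring]
  have hE : ∏ l ∈ Finset.range (n+1), Real.Gamma ((θ * l + a + b + 2) + (((n+1-1:ℕ)):ℝ))
      = ∏ l ∈ Finset.range (n+1), Real.Gamma (θ * l + (n+1) + a + b + 1) := by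
    refine Finset.prod_congr rfl fun l _ => ?_
    congr 1
    have : ((n+1-1:ℕ):ℝ) = (n:ℝ) := by norm_num
    rw [this]; push_cast; ring
  have hC : ∏ l ∈ Finset.range (n+1), Real.Gamma ((l:ℝ) + 2)
      = ((n+1).factorial : ℝ) * (Nat.superFactorial n : ℝ) := by
    have h1 : ∀ l : ℕ, Real.Gamma ((l:ℝ) + 2) = ((l+1).factorial : ℝ) := by
      intro l
      rw [show ((l:ℝ) + 2) = (((l+1:ℕ)):ℝ) + 1 by push_cast; ring,
        Real.Gamma_nat_eq_factorial]
    rw [Finset.prod_congr rfl fun l _ => h1 l, ← Nat.cast_prod,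
      Nat.prod_range_factorial_succ, Nat.superFactorial_succ]
    push_cast
    ring
  rw [hB, hE]
  have hsplit : ∏ l ∈ Finset.range (n+1),
      Real.Gamma (θ * l + a + 1) * Real.Gamma (l + 1 + b) * Real.Gamma (l + 2) /
        Real.Gamma (θ * l + (n+1:ℕ) + a + b + 1)
      = ((∏ l ∈ Finset.range (n+1), Real.Gamma (θ * l + a + 1)) *
          (∏ l ∈ Finset.range (n+1), Real.Gamma ((l:ℝ) + 1 + b)) *
          (∏ l ∈ Finset.range (n+1), Real.Gamma ((l:ℝ) + 2))) /
        ∏ l ∈ Finset.range (n+1), Real.Gamma (θ * l + (n+1) + a + b + 1) := by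
    rw [Finset.prod_div_distrib, Finset.prod_mul_distrib, Finset.prod_mul_distrib]
    push_cast
    ring
  rw [hsplit, hC]
  have hth : (-1:ℝ)^K * (-θ)^K = θ^K := by
    rw [← mul_pow]; norm_num
  have hEpos : (0:ℝ) < ∏ l ∈ Finset.range (n+1), Real.Gamma (θ * l + (n+1) + a + b + 1) := by
    refine Finset.prod_pos fun l _ => Real.Gamma_pos_of_pos ?_
    have h1 : (0:ℝ) ≤ θ * (l:ℕ) := mul_nonneg hθ.le (Nat.cast_nonneg _)
    have h2 : (0:ℝ) < (n:ℝ) + 1 := by positivity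
    push_cast
    linarith
  field_simp
  have hs : (-1:ℝ)^(K*2) = 1 := by rw [mul_comm, pow_mul]; norm_num
  linear_combination (((n+1).factorial : ℝ) * (Nat.superFactorial n : ℝ) *
    (∏ l ∈ Finset.range (n+1), Real.Gamma (θ * l + a + 1)) *
    (∏ l ∈ Finset.range (n+1), Real.Gamma ((l:ℝ) + 1 + b))) * hth +
    ((∏ l ∈ Finset.range (n+1), Real.Gamma (θ * l + a + 1)) *
    (∏ l ∈ Finset.range (n+1), Real.Gamma ((l:ℝ) + 1 + b)) * θ ^ K * (Nat.superFactorial n : ℝ) *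
    (1 - ((n+1).factorial : ℝ))) * hs
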